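/- arXiv:math-ph/0511004 — 3 statements merged into one kernel-verified Lean document; each statement's English description precedes it below -/
import Mathlib

section
/- There exists a Lie algebra automorphism of sl2 of order 3 sending X to Y, Y to Z, and Z to X, where X = 2e-h, Y = -2f-h, Z = h. -/
namespace TetPaper
variable {K : Type*} [Field K]

/-- Auxiliary bracket for `sl2` in the `e,f,h` coordinates. -/
def sl2b (u v : Fin 3 → K) : Fin 3 → K :=
  ![2*(u 2 * v 0 - u 0 * v 2), 2*(u 1 * v 2 - u 2 * v 1), u 0 * v 1 - u 1 * v 0]

lemma sl2b_add_lie (x y z : Fin 3 → K) : sl2b (x + y) z = sl2b x z + sl2b y z := by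
  funext i; fin_cases i <;> simp [sl2b] <;> ring

lemma sl2b_lie_add (x y z : Fin 3 → K) : sl2b x (y + z) = sl2b x y + sl2b x z := by
  funext i; fin_cases i <;> simp [sl2b] <;> ring

lemma sl2b_lie_self (x : Fin 3 → K) : sl2b x x = 0 := by
  funext i; fin_cases i <;> simp [sl2b, -mul_eq_zero] <;> ring

lemma sl2b_leibniz (x y z : Fin 3 → K) :
    sl2b x (sl2b y z) = sl2b (sl2b x y) z + sl2b y (sl2b x z) := by
  funext i; fin_cases i <;> simp [sl2b] <;> ring

lemma sl2b_smul (t : K) (x y : Fin 3 → K) : sl2b x (t • y) = t • sl2b x y := by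
  funext i; fin_cases i <;> simp [sl2b] <;> ring

end TetPaper

/-- The Lie algebra `sl2` over `K`, with basis `e, f, h` (coordinates `0, 1, 2`)
and brackets `[h,e] = 2e`, `[h,f] = -2f`, `[e,f] = h`. -/
def Sl2 (K : Type*) := Fin 3 → K

noncomputable instance {K : Type*} [Field K] : AddCommGroup (Sl2 K) :=
  inferInstanceAs (AddCommGroup (Fin 3 → K))

noncomputable instance {K : Type*} [Field K] : Module K (Sl2 K) :=
  inferInstanceAs (Module K (Fin 3 → K))

noncomputable instance {K : Type*} [Field K] : LieRing (Sl2 K) where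
  bracket u v := TetPaper.sl2b u v
  add_lie x y z := TetPaper.sl2b_add_lie x y z
  lie_add x y z := TetPaper.sl2b_lie_add x y z
  lie_self x := TetPaper.sl2b_lie_self x
  leibniz_lie x y z := TetPaper.sl2b_leibniz x y z

noncomputable instance {K : Type*} [Field K] : LieAlgebra K (Sl2 K) where
  lie_smul t x y := TetPaper.sl2b_smul t x y

namespace Sl2
variable (K : Type*) [Field K]
/-- The basis vector `e` of `sl2`. -/
noncomputable def e : Sl2 K := (![1,0,0] : Fin 3 → K)
/-- The basis vector `f` of `sl2`. -/
noncomputable def f : Sl2 K := (![0,1,0] : Fin 3 → K)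
/-- The basis vector `h` of `sl2`. -/
noncomputable def h : Sl2 K := (![0,0,1] : Fin 3 → K)
end Sl2



namespace TetPaper2
variable {K : Type*} [Field K]
lemma add_apply (u v : Sl2 K) (i : Fin 3) : (u + v) i = (u : Fin 3 → K) i + (v : Fin 3 → K) i := rfl
lemma sub_apply (u v : Sl2 K) (i : Fin 3) : (u - v) i = (u : Fin 3 → K) i - (v : Fin 3 → K) i := rfl
lemma neg_apply (u : Sl2 K) (i : Fin 3) : (-u) i = -((u : Fin 3 → K) i) := rfl
lemma smul_apply (t : K) (u : Sl2 K) (i : Fin 3) : (t • u) i = t * (u : Fin 3 → K) i := rfl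

noncomputable def A (K : Type*) [Field K] : Sl2 K →ₗ[K] Sl2 K where
  toFun := fun u : Fin 3 → K => (![u 0 - u 1 + 2*u 2, -u 0, -u 0 - u 2] : Fin 3 → K)
  map_add' := by intro u v; funext i; show _ = (_ : Fin 3 → K) i + (_ : Fin 3 → K) i; fin_cases i <;> simp [add_apply] <;> ring
  map_smul' := by intro t u; funext i; show _ = t * (_ : Fin 3 → K) i; fin_cases i <;> simp [smul_apply] <;> ring

noncomputable def B (K : Type*) [Field K] : Sl2 K → Sl2 K :=
  fun u : Fin 3 → K => (![-u 1, -u 0 + u 1 - 2*u 2, u 1 - u 2] : Fin 3 → K)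

lemma A_apply {K : Type*} [Field K] (u : Sl2 K) :
    A K u = (![u 0 - u 1 + 2*u 2, -u 0, -u 0 - u 2] : Fin 3 → K) := rfl

lemma bracket_def {K : Type*} [Field K] (u v : Sl2 K) : ⁅u, v⁆ = TetPaper.sl2b u v := rfl

noncomputable def phi (K : Type*) [Field K] : Sl2 K ≃ₗ⁅K⁆ Sl2 K :=
  { A K with
    map_lie' := by
      intro u v
      show A K (TetPaper.sl2b u v) = TetPaper.sl2b (A K u) (A K v)
      funext i
      rw [A_apply, A_apply]
      change (![TetPaper.sl2b u v 0 - TetPaper.sl2b u v 1 + 2 * TetPaper.sl2b u v 2, -TetPaper.sl2b u v 0,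
        -TetPaper.sl2b u v 0 - TetPaper.sl2b u v 2] : Fin 3 → K) i = _
      fin_cases i <;> simp [TetPaper.sl2b] <;> ring
    invFun := B K
    left_inv := by
      intro u
      show B K (A K u) = u
      funext i
      fin_cases i <;> simp [A_apply, B] <;> ring
    right_inv := by
      intro u
      show A K (B K u) = u
      funext i
      rw [A_apply]
      fin_cases i <;> simp [A_apply, B] <;> ring }

end TetPaper2

/-- there is a Lie algebra automorphism of `sl2` of order 3 sending
`X ↦ Y`, `Y ↦ Z`, `Z ↦ X`, where `X = 2e-h`, `Y = -2f-h`, `Z = h`. -/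
theorem stmt2 (K : Type*) [Field K] [CharZero K]
    (X Y Z : Sl2 K)
    (hX : X = (2:K) • Sl2.e K - Sl2.h K)
    (hY : Y = -((2:K) • Sl2.f K) - Sl2.h K)
    (hZ : Z = Sl2.h K) :
    ∃ φ : Sl2 K ≃ₗ⁅K⁆ Sl2 K,
      φ X = Y ∧ φ Y = Z ∧ φ Z = X ∧
      (∀ v, φ (φ (φ v)) = v) ∧ φ ≠ LieEquiv.refl := by
  refine ⟨TetPaper2.phi K, ?_, ?_, ?_, ?_, ?_⟩
  · subst hX hY
    show TetPaper2.A K _ = _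
    funext i
    simp only [TetPaper2.A_apply, TetPaper2.sub_apply, TetPaper2.smul_apply, TetPaper2.neg_apply]
    fin_cases i <;>
      simp [TetPaper2.A_apply, Sl2.e, Sl2.f, Sl2.h, TetPaper2.sub_apply, TetPaper2.smul_apply,
        TetPaper2.neg_apply] <;> ring
  · subst hY hZ
    show TetPaper2.A K _ = _
    funext i
    simp only [TetPaper2.A_apply, TetPaper2.sub_apply, TetPaper2.smul_apply, TetPaper2.neg_apply]
    fin_cases i <;>
      simp [TetPaper2.A_apply, Sl2.e, Sl2.f, Sl2.h, TetPaper2.sub_apply, TetPaper2.smul_apply,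
        TetPaper2.neg_apply] <;> ring
  · subst hX hZ
    show TetPaper2.A K _ = _
    funext i
    simp only [TetPaper2.A_apply, TetPaper2.sub_apply, TetPaper2.smul_apply, TetPaper2.neg_apply]
    fin_cases i <;>
      simp [TetPaper2.A_apply, Sl2.e, Sl2.f, Sl2.h, TetPaper2.sub_apply, TetPaper2.smul_apply,
        TetPaper2.neg_apply] <;> ring
  · intro v
    show TetPaper2.A K (TetPaper2.A K (TetPaper2.A K v)) = v
    funext i
    rw [TetPaper2.A_apply, TetPaper2.A_apply, TetPaper2.A_apply]
    fin_cases i <;> simp [TetPaper2.A_apply] <;> ring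
  · intro hcontra
    have h1 : TetPaper2.phi K (Sl2.e K) = Sl2.e K := by rw [hcontra]; rfl
    have h2 : TetPaper2.A K (Sl2.e K) = Sl2.e K := h1
    have h3 := congrFun h2 1
    rw [TetPaper2.A_apply] at h3
    simp [TetPaper2.A_apply, Sl2.e] at h3
end

section
/- In the Onsager algebra O, the map sending A_m to A_{1-m} for all integers m and G_l to -G_l for all positive integers l is a Lie algebra automorphism. -/
/-- The hypotheses saying that the Lie algebra `O` over `K`, together with the
elements `A m` (`m ∈ ℤ`) and `G l` (`l ≥ 1`), is the Onsager algebra: these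
elements form a basis and satisfy `[A l, A m] = 2 G (l-m)` for `l > m`,
`[G l, A m] = A (m+l) - A (m-l)` and `[G l, G m] = 0`. -/
structure IsOnsager (K : Type*) [Field K] (O : Type*) [LieRing O] [LieAlgebra K O]
    (A : ℤ → O) (G : ℤ → O) : Prop where
  basis : ∃ B : Module.Basis (ℤ ⊕ {l : ℤ // 1 ≤ l}) K O,
    (∀ m : ℤ, B (Sum.inl m) = A m) ∧ (∀ l : {l : ℤ // 1 ≤ l}, B (Sum.inr l) = G l)
  lie_AA : ∀ l m : ℤ, m < l → ⁅A l, A m⁆ = (2:K) • G (l - m)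
  lie_GA : ∀ l m : ℤ, 1 ≤ l → ⁅G l, A m⁆ = A (m + l) - A (m - l)
  lie_GG : ∀ l m : ℤ, 1 ≤ l → 1 ≤ m → ⁅G l, G m⁆ = 0

/-- in the Onsager algebra, the map `A m ↦ A (1-m)`, `G l ↦ -G l`
is a Lie algebra automorphism. -/
theorem stmt5 (K : Type*) [Field K] [CharZero K]
    (O : Type*) [LieRing O] [LieAlgebra K O] (A : ℤ → O) (G : ℤ → O)
    (hO : IsOnsager K O A G) :
    ∃ φ : O ≃ₗ⁅K⁆ O,
      (∀ m : ℤ, φ (A m) = A (1 - m)) ∧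
      (∀ l : ℤ, 1 ≤ l → φ (G l) = -G l) := by
  classical
  obtain ⟨B, hA, hG⟩ := hO.basis
  set σ : (ℤ ⊕ {l : ℤ // 1 ≤ l}) → O := fun i =>
    match i with
    | .inl m => A (1 - m)
    | .inr l => -G l with hσ
  set φ : O →ₗ[K] O := B.constr K σ with hφ
  have φA : ∀ m : ℤ, φ (A m) = A (1 - m) := by
    intro m; rw [← hA m, hφ, Module.Basis.constr_basis]
  have φG : ∀ l : ℤ, 1 ≤ l → φ (G l) = -G l := by
    intro l h
    rw [show G l = B (.inr ⟨l, h⟩) from (hG ⟨l, h⟩).symm, hφ, Module.Basis.constr_basis]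
    exact congrArg Neg.neg (hG _).symm
  have φinv : ∀ x, φ (φ x) = x := by
    have h : φ.comp φ = LinearMap.id := by
      apply B.ext; intro i
      rcases i with m | l
      · rw [LinearMap.comp_apply, hA m, φA, φA, LinearMap.id_apply]
        congr 1; ring
      · rw [LinearMap.comp_apply, hG l, φG l l.2, map_neg, φG l l.2, neg_neg,
          LinearMap.id_apply]
    intro x
    exact DFunLike.congr_fun h x
  -- bracket helpers
  have core : ∀ l m : ℤ, m < l → φ ⁅A l, A m⁆ = ⁅A (1 - l), A (1 - m)⁆ := by
    intro l m h
    rw [hO.lie_AA l m h, map_smul, φG (l - m) (by omega), ← lie_skew,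
      hO.lie_AA (1 - m) (1 - l) (by omega), show (1:ℤ) - m - (1 - l) = l - m by ring,
      smul_neg]
  have hbrA : ∀ l m : ℤ, φ ⁅A l, A m⁆ = ⁅A (1 - l), A (1 - m)⁆ := by
    intro l m
    rcases lt_trichotomy l m with h | h | h
    · rw [← lie_skew (A l), map_neg, core m l h, ← lie_skew, neg_neg]
    · subst h; simp
    · exact core l m h
  have hbrGA : ∀ l m : ℤ, 1 ≤ l → φ ⁅G l, A m⁆ = ⁅-G l, A (1 - m)⁆ := by
    intro l m hl
    rw [hO.lie_GA l m hl, map_sub, φA, φA, neg_lie, hO.lie_GA l (1 - m) hl,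
      show (1:ℤ) - (m + l) = 1 - m - l by ring, show (1:ℤ) - (m - l) = 1 - m + l by ring]
    abel
  have key : ∀ x y : O, φ ⁅x, y⁆ = ⁅φ x, φ y⁆ := by
    letI : LieRing (Module.End K O) := LieRing.ofAssociativeRing
    letI : LieAlgebra K (Module.End K O) := LieAlgebra.ofAssociativeAlgebra
    let L1 : O →ₗ[K] O →ₗ[K] O :=
      (LinearMap.llcomp K O O O φ).comp (LieAlgebra.ad K O).toLinearMap
    let L2 : O →ₗ[K] O →ₗ[K] O :=
      (LinearMap.lcomp K O φ).comp ((LieAlgebra.ad K O).toLinearMap.comp φ)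
    have hL : L1 = L2 := by
      apply B.ext; intro i; apply B.ext; intro j
      have e1 : ∀ x y : O, L1 x y = φ ⁅x, y⁆ := fun x y => rfl
      have e2 : ∀ x y : O, L2 x y = ⁅φ x, φ y⁆ := fun x y => rfl
      rw [LinearMap.comp_apply, LinearMap.comp_apply]
      show L1 (B i) (B j) = L2 (B i) (B j)
      rw [e1, e2]
      rcases i with m | l <;> rcases j with m' | l'
      · rw [hA, hA, φA, φA]; exact hbrA m m'
      · rw [hA, hG, φA, φG l' l'.2, ← lie_skew, map_neg, hbrGA l' m l'.2, ← lie_skew, neg_neg]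
      · rw [hG, hA, φG l l.2, φA]; exact hbrGA l m' l.2
      · rw [hG, hG, φG l l.2, φG l' l'.2, hO.lie_GG l l' l.2 l'.2, map_zero,
          neg_lie, lie_neg, hO.lie_GG l l' l.2 l'.2, neg_neg]
    intro x y
    have := DFunLike.congr_fun (DFunLike.congr_fun hL x) y
    exact this
  refine ⟨{ toFun := φ, map_add' := φ.map_add, map_smul' := φ.map_smul,
            map_lie' := fun {x y} => key x y,
            invFun := φ, left_inv := φinv, right_inv := φinv }, φA, φG⟩
end

section
/- The K-vector space A = K[T, T^{-1}, (T-1)^{-1}] decomposes as a direct sum A = K[T] ⊕ (T'-1)K[T'] ⊕ T''K[T''], where T' = 1 - T^{-1} and T'' = (1-T)^{-1}. -/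
set_option synthInstance.maxHeartbeats 1000000
set_option maxHeartbeats 1000000

open scoped Polynomial
open Submodule Set

/-- The algebra `K[T, T⁻¹, (T-1)⁻¹]`, realized as the subalgebra of the field of
rational functions generated by `T`, `T⁻¹` and `(T-1)⁻¹`. -/
noncomputable def Arat (K : Type*) [Field K] : Subalgebra K (RatFunc K) :=
  Algebra.adjoin K {RatFunc.X, RatFunc.X⁻¹, (RatFunc.X - 1)⁻¹}

/-- The element `T` of `Arat K`. -/
noncomputable def tA (K : Type*) [Field K] : Arat K :=
  ⟨RatFunc.X, Algebra.subset_adjoin (by simp)⟩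

/-- The element `T⁻¹` of `Arat K`. -/
noncomputable def tiA (K : Type*) [Field K] : Arat K :=
  ⟨RatFunc.X⁻¹, Algebra.subset_adjoin (by simp)⟩

/-- The element `T' = 1 - T⁻¹` of `Arat K`. -/
noncomputable def tpA (K : Type*) [Field K] : Arat K := 1 - tiA K

/-- The element `T'' = (1-T)⁻¹` of `Arat K`. -/
noncomputable def tppA (K : Type*) [Field K] : Arat K :=
  ⟨(1 - RatFunc.X)⁻¹, by
    have h1 : (RatFunc.X - 1)⁻¹ ∈ Arat K := Algebra.subset_adjoin (by simp)
    have h2 : ((1 : RatFunc K) - RatFunc.X)⁻¹ = -((RatFunc.X - 1)⁻¹) := by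
      rw [← neg_sub, inv_neg]
    rw [h2]; exact neg_mem h1⟩

/-- The three summands `K[T]`, `(T'-1)K[T']`, `T''K[T'']` of `A`. -/
noncomputable def DA (K : Type*) [Field K] : Fin 3 → Submodule K (Arat K) :=
  ![Submodule.span K (Set.range fun n : ℕ => (tA K) ^ n),
    Submodule.span K (Set.range fun n : ℕ => (tpA K - 1) * (tpA K) ^ n),
    Submodule.span K (Set.range fun n : ℕ => tppA K * (tppA K) ^ n)]
namespace Stmt9Aux

variable (K : Type*) [Field K]

noncomputable def phi (m : ℕ) : RatFunc K →ₗ[K] K where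
  toFun f := ((f : LaurentSeries K)).coeff (-(m+1) : ℤ)
  map_add' f g := by simp only [map_add, HahnSeries.coeff_add]
  map_smul' c f := by
    simp only [RingHom.id_apply]
    have e : c • f = algebraMap K[X] (RatFunc K) (Polynomial.C c) * f := by
      rw [Algebra.smul_def, RatFunc.algebraMap_C, RatFunc.algebraMap_eq_C]
    have h : ((algebraMap K[X] (RatFunc K) (Polynomial.C c) : RatFunc K) : LaurentSeries K)
        = HahnSeries.ofPowerSeries ℤ K ((Polynomial.C c : K[X]) : PowerSeries K) :=
      (RatFunc.coe_coe _).symm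
    rw [e, map_mul, h, Polynomial.coe_C, HahnSeries.ofPowerSeries_C,
      HahnSeries.C_mul_eq_smul, HahnSeries.coeff_smul, smul_eq_mul]

noncomputable def psi (m : ℕ) : RatFunc K →ₗ[K] K :=
  (phi K m).comp (RatFunc.laurent 1).toLinearMap

variable {K}

lemma phi_apply (m : ℕ) (f : RatFunc K) :
    phi K m f = ((f : LaurentSeries K)).coeff (-(m+1) : ℤ) := rfl

lemma psi_apply (m : ℕ) (f : RatFunc K) :
    psi K m f = phi K m (RatFunc.laurent 1 f) := rfl

lemma coe_algebraMap_poly (p : K[X]) :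
    ((algebraMap K[X] (RatFunc K) p : RatFunc K) : LaurentSeries K)
      = HahnSeries.ofPowerSeries ℤ K (p : PowerSeries K) :=
  (RatFunc.coe_coe p).symm

lemma coeff_ofPowerSeries_neg (w : PowerSeries K) (i : ℤ) (hi : i < 0) :
    (HahnSeries.ofPowerSeries ℤ K w).coeff i = 0 := by
  have := PowerSeries.coeff_coe (R := K) w i
  rw [if_pos hi] at this
  exact this

lemma phi_poly (m : ℕ) (p : K[X]) : phi K m (algebraMap K[X] (RatFunc K) p) = 0 := by
  rw [phi_apply, coe_algebraMap_poly]
  exact coeff_ofPowerSeries_neg _ _ (by omega)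

lemma phi_inv_pow (m : ℕ) (p : K[X]) (hp : p.coeff 0 ≠ 0) (j : ℕ) :
    phi K m ((algebraMap K[X] (RatFunc K) p)⁻¹ ^ j) = 0 := by
  have hu : IsUnit (p : PowerSeries K) := by
    rw [PowerSeries.isUnit_iff_constantCoeff, Polynomial.constantCoeff_coe]
    exact hp.isUnit
  obtain ⟨u, hu⟩ := hu
  have hmul : (p : PowerSeries K) * ((u⁻¹ : (PowerSeries K)ˣ) : PowerSeries K) = 1 := by
    rw [← hu]; exact u.mul_inv
  have hco : ((algebraMap K[X] (RatFunc K) p : RatFunc K) : LaurentSeries K)⁻¹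
      = HahnSeries.ofPowerSeries ℤ K ((u⁻¹ : (PowerSeries K)ˣ) : PowerSeries K) := by
    apply inv_eq_of_mul_eq_one_right
    rw [coe_algebraMap_poly, ← map_mul, hmul, map_one]
  have key : (((algebraMap K[X] (RatFunc K) p)⁻¹ ^ j : RatFunc K) : LaurentSeries K)
      = HahnSeries.ofPowerSeries ℤ K ((((u⁻¹ : (PowerSeries K)ˣ) : PowerSeries K)) ^ j) := by
    rw [map_pow, map_pow]
    congr 1
    rw [← hco]
    rw [show ((algebraMap K[X] (RatFunc K) p)⁻¹ : RatFunc K)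
        = 1 / (algebraMap K[X] (RatFunc K) p) by rw [one_div]]
    rw [map_div₀, map_one, one_div]
  rw [phi_apply, key]
  exact coeff_ofPowerSeries_neg _ _ (by omega)

end Stmt9Aux

namespace Stmt9Aux
variable {K : Type*} [Field K]

lemma X_pow_eq (n : ℕ) : (RatFunc.X : RatFunc K) ^ n
    = algebraMap K[X] (RatFunc K) (Polynomial.X ^ n) := by
  rw [map_pow, RatFunc.algebraMap_X]

lemma one_sub_X_eq : (1 - RatFunc.X : RatFunc K)
    = algebraMap K[X] (RatFunc K) (1 - Polynomial.X) := by
  rw [map_sub, RatFunc.algebraMap_X, map_one]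

lemma X_add_one_eq : (RatFunc.X + 1 : RatFunc K)
    = algebraMap K[X] (RatFunc K) (Polynomial.X + 1) := by
  rw [map_add, RatFunc.algebraMap_X, map_one]

lemma phi_X_pow (m n : ℕ) : phi K m ((RatFunc.X : RatFunc K) ^ n) = 0 := by
  rw [X_pow_eq]; exact phi_poly m _

lemma phi_Xinv_pow (m k : ℕ) :
    phi K m ((RatFunc.X : RatFunc K)⁻¹ ^ (k+1)) = if m = k then 1 else 0 := by
  rw [phi_apply]
  have h1 : (((RatFunc.X : RatFunc K)⁻¹ ^ (k+1) : RatFunc K) : LaurentSeries K)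
      = (HahnSeries.single ((k+1 : ℕ) : ℤ) (1 : K))⁻¹ := by
    rw [show ((RatFunc.X : RatFunc K)⁻¹ : RatFunc K) = 1 / RatFunc.X by rw [one_div]]
    rw [map_pow, map_div₀, map_one, RatFunc.coe_X,
      div_pow, one_pow, ← RatFunc.single_one_eq_pow, one_div]
  rw [h1, HahnSeries.inv_single, inv_one,
    HahnSeries.coeff_single]
  by_cases h : m = k
  · subst h; simp
  · rw [if_neg (by omega), if_neg h]

lemma phi_one_sub_X_inv_pow (m j : ℕ) :
    phi K m ((1 - RatFunc.X : RatFunc K)⁻¹ ^ j) = 0 := by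
  rw [one_sub_X_eq]
  exact phi_inv_pow m _ (by simp) j

lemma laurent_one_X : RatFunc.laurent (1 : K) RatFunc.X = RatFunc.X + 1 := by
  rw [RatFunc.laurent_X, map_one]

lemma psi_X_pow (m n : ℕ) : psi K m ((RatFunc.X : RatFunc K) ^ n) = 0 := by
  rw [psi_apply, map_pow, laurent_one_X, X_add_one_eq, ← map_pow]
  exact phi_poly m _

lemma psi_Xinv_pow (m k : ℕ) : psi K m ((RatFunc.X : RatFunc K)⁻¹ ^ (k+1)) = 0 := by
  rw [psi_apply, map_pow, map_inv₀, laurent_one_X, X_add_one_eq]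
  exact phi_inv_pow m _ (by simp) (k+1)

lemma psi_one_sub_X_inv_pow (m k : ℕ) :
    psi K m ((1 - RatFunc.X : RatFunc K)⁻¹ ^ (k+1))
      = if m = k then (-1 : K) ^ (k+1) else 0 := by
  rw [psi_apply, map_pow, map_inv₀, map_sub, map_one, laurent_one_X]
  have h : (1 - (RatFunc.X + 1) : RatFunc K) = -RatFunc.X := by ring
  have h3 : (((-RatFunc.X : RatFunc K))⁻¹ ^ (k+1) : RatFunc K)
      = ((-1 : K)^(k+1)) • ((RatFunc.X : RatFunc K)⁻¹ ^ (k+1)) := by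
    rw [inv_neg, neg_pow, Algebra.smul_def]
    congr 1
    rw [map_pow, map_neg, map_one]
  rw [h, h3, map_smul, phi_Xinv_pow, smul_eq_mul]
  by_cases hmk : m = k <;> simp [hmk]

end Stmt9Aux

namespace Stmt9Aux
variable (K : Type*) [Field K]

noncomputable def P0 : Submodule K (RatFunc K) :=
  span K (range fun n : ℕ => (RatFunc.X : RatFunc K) ^ n)
noncomputable def P1 : Submodule K (RatFunc K) :=
  span K (range fun n : ℕ => (RatFunc.X : RatFunc K)⁻¹ ^ (n+1))
noncomputable def P2 : Submodule K (RatFunc K) :=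
  span K (range fun n : ℕ => (1 - RatFunc.X : RatFunc K)⁻¹ ^ (n+1))

variable {K}

lemma P0_le_ker_phi (m : ℕ) : P0 K ≤ LinearMap.ker (phi K m) := by
  rw [P0, span_le]; rintro _ ⟨n, rfl⟩; exact phi_X_pow m n

lemma P2_le_ker_phi (m : ℕ) : P2 K ≤ LinearMap.ker (phi K m) := by
  rw [P2, span_le]; rintro _ ⟨n, rfl⟩; exact phi_one_sub_X_inv_pow m (n+1)

lemma P0_le_ker_psi (m : ℕ) : P0 K ≤ LinearMap.ker (psi K m) := by
  rw [P0, span_le]; rintro _ ⟨n, rfl⟩; exact psi_X_pow m n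

lemma P1_le_ker_psi (m : ℕ) : P1 K ≤ LinearMap.ker (psi K m) := by
  rw [P1, span_le]; rintro _ ⟨n, rfl⟩; exact psi_Xinv_pow m n

lemma P1_eq_zero {f : RatFunc K} (hf : f ∈ P1 K) (h : ∀ m, phi K m f = 0) : f = 0 := by
  rw [P1, Finsupp.mem_span_range_iff_exists_finsupp] at hf
  obtain ⟨c, hc⟩ := hf
  have hck : ∀ k, c k = 0 := by
    intro k
    have hk := h k
    rw [← hc, map_finsuppSum] at hk
    simp only [map_smul, phi_Xinv_pow, smul_eq_mul, mul_ite, mul_one, mul_zero,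
      Finsupp.sum_ite_eq] at hk
    by_cases hks : k ∈ c.support
    · rwa [if_pos hks] at hk
    · exact Finsupp.notMem_support_iff.mp hks
  have hc0 : c = 0 := Finsupp.ext hck
  rw [← hc, hc0, Finsupp.sum_zero_index]

lemma P2_eq_zero {f : RatFunc K} (hf : f ∈ P2 K) (h : ∀ m, psi K m f = 0) : f = 0 := by
  rw [P2, Finsupp.mem_span_range_iff_exists_finsupp] at hf
  obtain ⟨c, hc⟩ := hf
  have hck : ∀ k, c k = 0 := by
    intro k
    have hk := h k
    rw [← hc, map_finsuppSum] at hk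
    simp only [map_smul, psi_one_sub_X_inv_pow, smul_eq_mul, mul_ite, mul_zero,
      Finsupp.sum_ite_eq] at hk
    by_cases hks : k ∈ c.support
    · rw [if_pos hks] at hk
      have hne : ((-1 : K) ^ (k+1)) ≠ 0 := pow_ne_zero _ (by norm_num)
      exact (mul_eq_zero.mp hk).resolve_right hne
    · exact Finsupp.notMem_support_iff.mp hks
  have hc0 : c = 0 := Finsupp.ext hck
  rw [← hc, hc0, Finsupp.sum_zero_index]

lemma disj1 : Disjoint (P1 K) (P0 K ⊔ P2 K) := by
  rw [Submodule.disjoint_def]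
  intro f hf1 hf02
  obtain ⟨g, hg, h2, hh, rfl⟩ := Submodule.mem_sup.mp hf02
  refine P1_eq_zero hf1 fun m => ?_
  rw [map_add, LinearMap.mem_ker.mp (P0_le_ker_phi m hg),
    LinearMap.mem_ker.mp (P2_le_ker_phi m hh), add_zero]

lemma disj2 : Disjoint (P2 K) (P0 K ⊔ P1 K) := by
  rw [Submodule.disjoint_def]
  intro f hf2 hf01
  obtain ⟨g, hg, h2, hh, rfl⟩ := Submodule.mem_sup.mp hf01
  refine P2_eq_zero hf2 fun m => ?_
  rw [map_add, LinearMap.mem_ker.mp (P0_le_ker_psi m hg),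
    LinearMap.mem_ker.mp (P1_le_ker_psi m hh), add_zero]

lemma disj0 : Disjoint (P0 K) (P1 K ⊔ P2 K) := by
  rw [Submodule.disjoint_def]
  intro f hf0 hf12
  obtain ⟨g, hg, h2, hh, rfl⟩ := Submodule.mem_sup.mp hf12
  have hgz : g = 0 := by
    refine P1_eq_zero hg fun m => ?_
    have h1 : phi K m (g + h2) = 0 := LinearMap.mem_ker.mp (P0_le_ker_phi m hf0)
    rw [map_add, LinearMap.mem_ker.mp (P2_le_ker_phi m hh), add_zero] at h1
    exact h1
  subst hgz
  rw [zero_add] at hf0 ⊢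
  refine P2_eq_zero hh fun m => ?_
  exact LinearMap.mem_ker.mp (P0_le_ker_psi m hf0)

end Stmt9Aux

namespace Stmt9Aux
variable (K : Type*) [Field K]

lemma span_shift {A : Type*} {K : Type*} [Field K] [CommRing A] [Algebra K A] (y : A) :
    span K (range fun n : ℕ => (-y) * (1 - y)^n)
      = span K (range fun n : ℕ => y^(n+1)) := by
  set M := span K (range fun n : ℕ => y^(n+1)) with hMdef
  set N := span K (range fun n : ℕ => (-y) * (1 - y)^n) with hNdef
  have hM : ∀ z ∈ M, y * z ∈ M := by
    intro z hz
    induction hz using Submodule.span_induction with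
    | mem x hx =>
      obtain ⟨n, rfl⟩ := hx
      exact subset_span ⟨n+1, by ring⟩
    | zero => rw [mul_zero]; exact zero_mem _
    | add a b _ _ ha hb => rw [mul_add]; exact add_mem ha hb
    | smul c a _ ha => rw [mul_smul_comm]; exact smul_mem _ _ ha
  have hN : ∀ z ∈ N, y * z ∈ N := by
    intro z hz
    induction hz using Submodule.span_induction with
    | mem x hx =>
      obtain ⟨n, rfl⟩ := hx
      have e : y * ((-y) * (1 - y)^n)
          = ((-y) * (1 - y)^n) - ((-y) * (1 - y)^(n+1)) := by ring
      rw [e]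
      exact sub_mem (subset_span ⟨n, rfl⟩) (subset_span ⟨n+1, rfl⟩)
    | zero => rw [mul_zero]; exact zero_mem _
    | add a b _ _ ha hb => rw [mul_add]; exact add_mem ha hb
    | smul c a _ ha => rw [mul_smul_comm]; exact smul_mem _ _ ha
  apply le_antisymm
  · rw [hNdef, span_le]
    rintro _ ⟨n, rfl⟩
    show (-y) * (1 - y)^n ∈ M
    have Q : ∀ n : ℕ, y * (1 - y)^n ∈ M := by
      intro n
      induction n with
      | zero => exact subset_span ⟨0, by ring⟩
      | succ n ih =>
        have e : y * (1-y)^(n+1) = y * (1-y)^n - y * (y * (1-y)^n) := by ring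
        rw [e]; exact sub_mem ih (hM _ ih)
    have e : (-y) * (1 - y)^n = -(y * (1-y)^n) := by ring
    rw [e]; exact neg_mem (Q n)
  · rw [hMdef, span_le]
    rintro _ ⟨n, rfl⟩
    show y^(n+1) ∈ N
    induction n with
    | zero =>
      have e : y^(0+1) = -((-y) * (1-y)^0) := by ring
      rw [e]; exact neg_mem (subset_span ⟨0, rfl⟩)
    | succ n ih =>
      have e : y^(n+1+1) = y * y^(n+1) := by ring
      rw [e]; exact hN _ ih

lemma one_sub_X_ne_zero : (1 - RatFunc.X : RatFunc K) ≠ 0 := by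
  rw [one_sub_X_eq]
  apply RatFunc.algebraMap_ne_zero
  intro h
  have := congrArg (fun q => Polynomial.coeff q 1) h
  simp [Polynomial.coeff_one] at this

lemma i1 : tA K * tiA K = 1 :=
  Subtype.ext (mul_inv_cancel₀ RatFunc.X_ne_zero)

lemma i2 : tA K * tppA K = tppA K - 1 := by
  apply Subtype.ext
  show (RatFunc.X : RatFunc K) * (1 - RatFunc.X)⁻¹ = (1 - RatFunc.X)⁻¹ - 1
  have h := one_sub_X_ne_zero K
  field_simp
  ring

lemma i3 : tiA K * tppA K = tiA K + tppA K := by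
  apply Subtype.ext
  show (RatFunc.X : RatFunc K)⁻¹ * (1 - RatFunc.X)⁻¹
      = RatFunc.X⁻¹ + (1 - RatFunc.X)⁻¹
  have h := one_sub_X_ne_zero K
  have h2 := RatFunc.X_ne_zero (K := K)
  field_simp
  ring

lemma dA0 : DA K 0 = span K (range fun n : ℕ => tA K ^ n) := by
  simp [DA]

lemma dA1 : DA K 1 = span K (range fun n : ℕ => tiA K ^ (n+1)) := by
  have h : DA K 1 = span K (range fun n : ℕ => (tpA K - 1) * (tpA K) ^ n) := by
    simp [DA]
  rw [h]
  have h2 : (fun n : ℕ => (tpA K - 1) * (tpA K) ^ n)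
      = fun n : ℕ => (-(tiA K)) * (1 - tiA K) ^ n := by
    funext n
    show ((1 - tiA K) - 1) * (1 - tiA K) ^ n = _
    ring
  rw [h2, span_shift]

lemma dA2 : DA K 2 = span K (range fun n : ℕ => tppA K ^ (n+1)) := by
  have h : DA K 2 = span K (range fun n : ℕ => tppA K * (tppA K) ^ n) := by
    simp [DA]
  rw [h]
  congr 1
  apply congrArg
  funext n
  ring

end Stmt9Aux

namespace Stmt9Aux
variable (K : Type*) [Field K]

noncomputable def SS : Submodule K (Arat K) := DA K 0 ⊔ DA K 1 ⊔ DA K 2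

variable {K}

lemma mT (n : ℕ) : tA K ^ n ∈ SS K := by
  have h : tA K ^ n ∈ DA K 0 := by rw [dA0]; exact subset_span ⟨n, rfl⟩
  have h2 : DA K 0 ≤ SS K := le_sup_of_le_left le_sup_left
  exact h2 h

lemma mTi (n : ℕ) : tiA K ^ (n+1) ∈ SS K := by
  have h : tiA K ^ (n+1) ∈ DA K 1 := by rw [dA1]; exact subset_span ⟨n, rfl⟩
  have h2 : DA K 1 ≤ SS K := le_sup_of_le_left le_sup_right
  exact h2 h

lemma mS (n : ℕ) : tppA K ^ (n+1) ∈ SS K := by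
  have h : tppA K ^ (n+1) ∈ DA K 2 := by rw [dA2]; exact subset_span ⟨n, rfl⟩
  have h2 : DA K 2 ≤ SS K := le_sup_right
  exact h2 h

lemma m1 : (1 : Arat K) ∈ SS K := by have h := mT (K := K) 0; rwa [pow_zero] at h

lemma L1 : ∀ a b : ℕ, tA K ^ a * tiA K ^ b ∈ SS K := by
  intro a
  induction a with
  | zero =>
    intro b
    cases b with
    | zero => simpa using m1
    | succ k => simpa using mTi k
  | succ a ih =>
    intro b
    cases b with
    | zero => simpa using mT (a+1)
    | succ k =>
      have e : tA K ^ (a+1) * tiA K ^ (k+1) = tA K ^ a * tiA K ^ k := by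
        linear_combination (tA K ^ a * tiA K ^ k) * (i1 K)
      rw [e]; exact ih k

lemma L2 : ∀ a b : ℕ, tA K ^ a * tppA K ^ b ∈ SS K := by
  intro a
  induction a with
  | zero =>
    intro b
    cases b with
    | zero => simpa using m1
    | succ k => simpa using mS k
  | succ a ih =>
    intro b
    cases b with
    | zero => simpa using mT (a+1)
    | succ k =>
      have e : tA K ^ (a+1) * tppA K ^ (k+1)
          = tA K ^ a * tppA K ^ (k+1) - tA K ^ a * tppA K ^ k := by
        linear_combination (tA K ^ a * tppA K ^ k) * (i2 K)
      rw [e]; exact sub_mem (ih (k+1)) (ih k)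

lemma L3 : ∀ (N a b : ℕ), a + b ≤ N → tiA K ^ a * tppA K ^ b ∈ SS K := by
  intro N
  induction N with
  | zero =>
    intro a b h
    obtain ⟨rfl, rfl⟩ : a = 0 ∧ b = 0 := by omega
    simpa using m1
  | succ N ih =>
    intro a b h
    cases a with
    | zero =>
      cases b with
      | zero => simpa using m1
      | succ k => simpa using mS k
    | succ j =>
      cases b with
      | zero => simpa using mTi j
      | succ k =>
        have e : tiA K ^ (j+1) * tppA K ^ (k+1)
            = tiA K ^ (j+1) * tppA K ^ k + tiA K ^ j * tppA K ^ (k+1) := by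
          linear_combination (tiA K ^ j * tppA K ^ k) * (i3 K)
        rw [e]
        exact add_mem (ih (j+1) k (by omega)) (ih j (k+1) (by omega))

lemma SS_eq_span : SS K = span K
    ((range fun n : ℕ => tA K ^ n) ∪ (range fun n : ℕ => tiA K ^ (n+1))
      ∪ (range fun n : ℕ => tppA K ^ (n+1))) := by
  rw [SS, dA0, dA1, dA2, span_union, span_union]

lemma mul_SS : ∀ x ∈ SS K, ∀ y ∈ SS K, x * y ∈ SS K := by
  have hgen : ∀ x ∈ ((range fun n : ℕ => tA K ^ n) ∪ (range fun n : ℕ => tiA K ^ (n+1))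
      ∪ (range fun n : ℕ => tppA K ^ (n+1))),
      ∀ y ∈ ((range fun n : ℕ => tA K ^ n) ∪ (range fun n : ℕ => tiA K ^ (n+1))
      ∪ (range fun n : ℕ => tppA K ^ (n+1))), x * y ∈ SS K := by
    rintro x (((⟨a, rfl⟩ | ⟨a, rfl⟩) | ⟨a, rfl⟩)) y (((⟨b, rfl⟩ | ⟨b, rfl⟩) | ⟨b, rfl⟩))
    · rw [← pow_add]; exact mT _
    · exact L1 a (b+1)
    · exact L2 a (b+1)
    · rw [mul_comm]; exact L1 b (a+1)
    · rw [← pow_add, show (a+1)+(b+1) = (a+b+1)+1 from by omega]; exact mTi _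
    · exact L3 ((a+1)+(b+1)) (a+1) (b+1) le_rfl
    · rw [mul_comm]; exact L2 b (a+1)
    · rw [mul_comm]; exact L3 ((b+1)+(a+1)) (b+1) (a+1) le_rfl
    · rw [← pow_add, show (a+1)+(b+1) = (a+b+1)+1 from by omega]; exact mS _
  intro x hx y hy
  rw [SS_eq_span] at hx hy
  induction hx using Submodule.span_induction with
  | mem z hz =>
    induction hy using Submodule.span_induction with
    | mem w hw => exact hgen z hz w hw
    | zero => rw [mul_zero]; exact zero_mem _
    | add a b _ _ iha ihb => rw [mul_add]; exact add_mem iha ihb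
    | smul c a _ iha => rw [mul_smul_comm]; exact smul_mem _ _ iha
  | zero => rw [zero_mul]; exact zero_mem _
  | add a b _ _ iha ihb => rw [add_mul]; exact add_mem iha ihb
  | smul c a _ iha => rw [smul_mul_assoc]; exact smul_mem _ _ iha

lemma top_mem (x : Arat K) : x ∈ SS K := by
  have memX : ∀ w : Arat K, (w : RatFunc K) = RatFunc.X → w ∈ SS K := by
    intro w hw
    have h : w = tA K := Subtype.ext hw
    rw [h]; simpa using mT (K := K) 1
  have memXi : ∀ w : Arat K, (w : RatFunc K) = RatFunc.X⁻¹ → w ∈ SS K := by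
    intro w hw
    have h : w = tiA K := Subtype.ext hw
    rw [h]; simpa using mTi (K := K) 0
  have memXs : ∀ w : Arat K, (w : RatFunc K) = (RatFunc.X - 1)⁻¹ → w ∈ SS K := by
    intro w hw
    have h : w = -(tppA K) := by
      apply Subtype.ext
      show (w : RatFunc K) = -((1 - RatFunc.X)⁻¹)
      rw [hw, ← inv_neg, neg_sub]
    rw [h]
    exact neg_mem (by simpa using mS (K := K) 0)
  have memC : ∀ (r : K) (w : Arat K), (w : RatFunc K) = algebraMap K (RatFunc K) r
      → w ∈ SS K := by
    intro r w hw
    have h : w = r • (1 : Arat K) := by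
      apply Subtype.ext
      rw [hw]
      show algebraMap K (RatFunc K) r = r • (1 : RatFunc K)
      rw [Algebra.algebraMap_eq_smul_one]
    rw [h]; exact smul_mem _ _ m1
  have key : ∀ (z : RatFunc K) (hz : z ∈ Algebra.adjoin K
      ({RatFunc.X, RatFunc.X⁻¹, (RatFunc.X - 1)⁻¹} : Set (RatFunc K))),
      (⟨z, hz⟩ : Arat K) ∈ SS K := by
    intro z hz
    induction hz using Algebra.adjoin_induction with
    | mem w hw =>
      simp only [Set.mem_insert_iff, Set.mem_singleton_iff] at hw
      rcases hw with rfl | rfl | rfl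
      · exact memX _ rfl
      · exact memXi _ rfl
      · exact memXs _ rfl
    | algebraMap r => exact memC r _ rfl
    | add u v hu hv ihu ihv => exact add_mem ihu ihv
    | mul u v hu hv ihu ihv => exact mul_SS _ ihu _ ihv
  have h := key x.1 x.2
  simpa using h

end Stmt9Aux

namespace Stmt9Aux
variable {K : Type*} [Field K]

lemma map_span_range (f : ℕ → Arat K) :
    map (Subalgebra.val (Arat K)).toLinearMap (span K (range f))
      = span K (range fun n => (f n : RatFunc K)) := by
  rw [Submodule.map_span]
  congr 1
  rw [← Set.range_comp]
  rfl

lemma map_DA0 : map (Subalgebra.val (Arat K)).toLinearMap (DA K 0) = P0 K := by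
  rw [dA0, map_span_range, P0]
  congr 1

lemma map_DA1 : map (Subalgebra.val (Arat K)).toLinearMap (DA K 1) = P1 K := by
  rw [dA1, map_span_range, P1]
  congr 1

lemma map_DA2 : map (Subalgebra.val (Arat K)).toLinearMap (DA K 2) = P2 K := by
  rw [dA2, map_span_range, P2]
  congr 1

lemma disj_pull {a b : Submodule K (Arat K)} {a' b' : Submodule K (RatFunc K)}
    (ha : map (Subalgebra.val (Arat K)).toLinearMap a ≤ a')
    (hb : map (Subalgebra.val (Arat K)).toLinearMap b ≤ b')
    (hd : Disjoint a' b') : Disjoint a b := by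
  rw [Submodule.disjoint_def] at hd ⊢
  intro x hxa hxb
  have h0 : ((x : RatFunc K)) = 0 :=
    hd _ (ha (Submodule.mem_map_of_mem hxa)) (hb (Submodule.mem_map_of_mem hxb))
  exact Subtype.ext h0

end Stmt9Aux

open Stmt9Aux in
/-- `A = K[T] ⊕ (T'-1)K[T'] ⊕ T''K[T'']` as `K`-vector spaces. -/
theorem stmt9 (K : Type*) [Field K] [CharZero K] :
    DirectSum.IsInternal (DA K) := by
  rw [DirectSum.isInternal_submodule_iff_iSupIndep_and_iSup_eq_top]
  constructor
  · rw [iSupIndep_def]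
    intro i
    fin_cases i
    · have hle : (⨆ j, ⨆ (_ : j ≠ (0 : Fin 3)), DA K j) ≤ DA K 1 ⊔ DA K 2 := by
        apply iSup_le; intro j; apply iSup_le; intro hj
        fin_cases j
        · exact absurd rfl hj
        · exact le_sup_left
        · exact le_sup_right
      have hd : Disjoint (DA K 0) (DA K 1 ⊔ DA K 2) :=
        disj_pull (le_of_eq map_DA0)
          (le_of_eq (by rw [Submodule.map_sup, map_DA1, map_DA2])) (disj0)
      exact hd.mono_right hle
    · have hle : (⨆ j, ⨆ (_ : j ≠ (1 : Fin 3)), DA K j) ≤ DA K 0 ⊔ DA K 2 := by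
        apply iSup_le; intro j; apply iSup_le; intro hj
        fin_cases j
        · exact le_sup_left
        · exact absurd rfl hj
        · exact le_sup_right
      have hd : Disjoint (DA K 1) (DA K 0 ⊔ DA K 2) :=
        disj_pull (le_of_eq map_DA1)
          (le_of_eq (by rw [Submodule.map_sup, map_DA0, map_DA2])) (disj1)
      exact hd.mono_right hle
    · have hle : (⨆ j, ⨆ (_ : j ≠ (2 : Fin 3)), DA K j) ≤ DA K 0 ⊔ DA K 1 := by
        apply iSup_le; intro j; apply iSup_le; intro hj
        fin_cases j
        · exact le_sup_left
        · exact le_sup_right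
        · exact absurd rfl hj
      have hd : Disjoint (DA K 2) (DA K 0 ⊔ DA K 1) :=
        disj_pull (le_of_eq map_DA2)
          (le_of_eq (by rw [Submodule.map_sup, map_DA0, map_DA1])) (disj2)
      exact hd.mono_right hle
  · rw [eq_top_iff]
    intro x _
    have hx := top_mem x
    have hle : SS K ≤ ⨆ i, DA K i := by
      rw [SS]
      exact sup_le (sup_le (le_iSup _ 0) (le_iSup _ 1)) (le_iSup _ 2)
    exact hle hx
end
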